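/- Let s₁ ∈ (0,1), put λ = ω_p(s₁), let s₂ ∈ (H_q(λ), 1), and let t satisfy 1 ≤ t ≤ λ. Then F(τ(s₁,s₂,t)) < (p−q)·A(s₂). -/

import Mathlib

noncomputable section

open Real Set

/-- `H r z = r·z^(r-1) - (r-1)·z^r`. -/
def H (r z : ℝ) : ℝ := r * z ^ (r - 1) - (r - 1) * z ^ r

/-- `ω` is the inverse of `H r`, mapping `(0,1]` into `[1, r/(r-1))`,
    so that `H r (ω s) = s` for `s ∈ (0,1]`. -/
def IsOmega (r : ℝ) (ω : ℝ → ℝ) : Prop :=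
  ∀ s ∈ Set.Ioc (0 : ℝ) 1, ω s ∈ Set.Ico (1 : ℝ) (r / (r - 1)) ∧ H r (ω s) = s

/-- `τ(s₁,s₂,t) = ((p-q)/p)·(t^p - s₁)/(t^(p-q) - s₁/s₂)`. -/
def tau (p q s₁ s₂ t : ℝ) : ℝ :=
  ((p - q) / p) * ((t ^ p - s₁) / (t ^ (p - q) - s₁ / s₂))

/-- `F(τ)` from the paper, where `ω` plays the role of `ω_q`. -/
def Ffun (p q : ℝ) (ω : ℝ → ℝ) (τ : ℝ) : ℝ :=
  (τ / (1 - ω τ)) * (p - (q * (p - 1) / (q - 1)) * ω τ)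
    - q * (p * ω τ ^ (q - 1) - (p - 1) * ω τ ^ q)

/-- `A(s)` from the paper, where `ω` plays the role of `ω_q`. -/
def Afun (q : ℝ) (ω : ℝ → ℝ) (s : ℝ) : ℝ :=
  s * (ω s / ((q - 1) * (ω s - 1)) + ω s ^ q / s)

/-- The function `w ↦ w^q/((q-1)(w-1))` is strictly decreasing on `(1, q/(q-1))`. -/
theorem aux_fdec (q a b : ℝ) (hq : 1 < q) (ha : 1 < a) (hb : b < q / (q - 1)) (hab : a < b) :
    b ^ q / ((q - 1) * (b - 1)) < a ^ q / ((q - 1) * (a - 1)) := by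
  have hq1 : (0:ℝ) < q - 1 := by linarith
  have key : StrictAntiOn (fun w : ℝ => w ^ q / ((q - 1) * (w - 1))) (Icc a b) := by
    have hder : ∀ x ∈ Icc a b, HasDerivAt (fun w : ℝ => w ^ q / ((q - 1) * (w - 1)))
        ((q * x ^ (q - 1) * ((q - 1) * (x - 1)) - x ^ q * (q - 1)) / ((q - 1) * (x - 1)) ^ 2) x := by
      intro x hx
      have hx1 : 1 < x := lt_of_lt_of_le ha hx.1
      have hd1 : HasDerivAt (fun w : ℝ => w ^ q) (q * x ^ (q - 1)) x :=
        Real.hasDerivAt_rpow_const (Or.inl (by positivity))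
      have hd2 : HasDerivAt (fun w : ℝ => (q - 1) * (w - 1)) (q - 1) x := by
        simpa using (((hasDerivAt_id x).sub_const 1).const_mul (q - 1))
      exact hd1.div hd2 (by nlinarith)
    apply strictAntiOn_of_deriv_neg (convex_Icc a b)
      (fun x hx => ((hder x hx).continuousAt).continuousWithinAt)
    intro x hx
    rw [interior_Icc] at hx
    have hx1 : 1 < x := ha.trans hx.1
    have hx2 : x < q / (q - 1) := hx.2.trans hb
    rw [((hder x (Ioo_subset_Icc_self hx)).deriv)]
    have hxp : (0:ℝ) < x ^ (q - 1) := Real.rpow_pos_of_pos (by linarith) _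
    have hxq : x ^ q = x ^ (q - 1) * x := by
      rw [← Real.rpow_add_one (by positivity) (q - 1)]; ring_nf
    have hx3 : (q - 1) * x < q := by
      rw [lt_div_iff₀ hq1] at hx2; linarith
    apply div_neg_of_neg_of_pos
    · have he : q * x ^ (q - 1) * ((q - 1) * (x - 1)) - x ^ q * (q - 1)
          = (q - 1) * x ^ (q - 1) * ((q - 1) * x - q) := by rw [hxq]; ring
      rw [he]
      exact mul_neg_of_pos_of_neg (by positivity) (by linarith)
    · exact pow_pos (mul_pos hq1 (by linarith)) 2
  have := key (left_mem_Icc.2 hab.le) (right_mem_Icc.2 hab.le) hab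
  simpa using this

/-- `H q` is antitone on `[1, ∞)`. -/
theorem aux_H_anti (q : ℝ) (hq : 1 < q) : AntitoneOn (H q) (Ici 1) := by
  have hder : ∀ x ∈ Ici (1:ℝ), HasDerivAt (H q)
      (q * ((q - 1) * x ^ (q - 1 - 1)) - (q - 1) * (q * x ^ (q - 1))) x := by
    intro x hx
    have hx0 : (0:ℝ) < x := lt_of_lt_of_le one_pos hx
    have hd1 : HasDerivAt (fun z : ℝ => z ^ (q - 1)) ((q - 1) * x ^ (q - 1 - 1)) x :=
      Real.hasDerivAt_rpow_const (Or.inl (by positivity))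
    have hd2 : HasDerivAt (fun z : ℝ => z ^ q) (q * x ^ (q - 1)) x :=
      Real.hasDerivAt_rpow_const (Or.inl (by positivity))
    exact (hd1.const_mul q).sub (hd2.const_mul (q - 1))
  apply antitoneOn_of_deriv_nonpos (convex_Ici 1)
    (fun x hx => ((hder x hx).continuousAt).continuousWithinAt)
  · intro x hx
    rw [interior_Ici] at hx
    exact ((hder x (mem_Ici.2 (le_of_lt (mem_Ioi.1 hx)))).differentiableAt).differentiableWithinAt
  · intro x hx
    rw [interior_Ici] at hx
    rw [((hder x (mem_Ici.2 (le_of_lt (mem_Ioi.1 hx)))).deriv)]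
    have hx0 : (0:ℝ) < x := lt_trans one_pos hx
    have hxp : (0:ℝ) < x ^ (q - 1 - 1) := Real.rpow_pos_of_pos hx0 _
    have hxq : x ^ (q - 1) = x ^ (q - 1 - 1) * x := by
      rw [← Real.rpow_add_one (by positivity) (q - 1 - 1)]; ring_nf
    rw [hxq]
    nlinarith [mul_pos (mul_pos (show (0:ℝ) < q * (q-1) by nlinarith) hxp)
      (show (0:ℝ) < x - 1 by have : 1 < x := hx; linarith)]

/-- `t ↦ s₂·t^(p-q) - s₁ - ((p-q)/p)(t^p - s₁)` is antitone on `[1, ∞)` when `s₂ ≤ 1`. -/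
theorem aux_g_anti (p q s₁ s₂ : ℝ) (hq : 1 < q) (hqp : q < p) (hs2 : s₂ ≤ 1) :
    AntitoneOn (fun t : ℝ => s₂ * t ^ (p - q) - s₁ - ((p - q) / p) * (t ^ p - s₁)) (Ici 1) := by
  have hp0 : (0:ℝ) < p := by linarith
  have hder : ∀ x ∈ Ici (1:ℝ), HasDerivAt
      (fun t : ℝ => s₂ * t ^ (p - q) - s₁ - ((p - q) / p) * (t ^ p - s₁))
      (s₂ * ((p - q) * x ^ (p - q - 1)) - ((p - q) / p) * (p * x ^ (p - 1))) x := by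
    intro x hx
    have hx0 : (0:ℝ) < x := lt_of_lt_of_le one_pos hx
    have hd1 : HasDerivAt (fun t : ℝ => t ^ (p - q)) ((p - q) * x ^ (p - q - 1)) x :=
      Real.hasDerivAt_rpow_const (Or.inl (by positivity))
    have hd2 : HasDerivAt (fun t : ℝ => t ^ p) (p * x ^ (p - 1)) x :=
      Real.hasDerivAt_rpow_const (Or.inl (by positivity))
    exact ((hd1.const_mul s₂).sub_const s₁).sub (((hd2.sub_const s₁).const_mul ((p - q) / p)))
  apply antitoneOn_of_deriv_nonpos (convex_Ici 1)
    (fun x hx => ((hder x hx).continuousAt).continuousWithinAt)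
  · intro x hx
    rw [interior_Ici] at hx
    exact ((hder x (mem_Ici.2 (le_of_lt (mem_Ioi.1 hx)))).differentiableAt).differentiableWithinAt
  · intro x hx
    rw [interior_Ici] at hx
    have hx1 : (1:ℝ) < x := hx
    have hx0 : (0:ℝ) < x := by linarith
    rw [((hder x hx1.le).deriv)]
    have hxp : (0:ℝ) < x ^ (p - q - 1) := Real.rpow_pos_of_pos hx0 _
    have hxq : (1:ℝ) ≤ x ^ q := Real.one_le_rpow hx1.le (by linarith)
    have hxe : x ^ (p - 1) = x ^ (p - q - 1) * x ^ q := by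
      rw [← Real.rpow_add hx0]; ring_nf
    have hdiv : ((p - q) / p) * (p * x ^ (p - 1)) = (p - q) * x ^ (p - 1) := by
      field_simp
    rw [hdiv, hxe]
    have h1 : s₂ * x ^ (p - q - 1) ≤ x ^ (p - q - 1) * x ^ q := by nlinarith
    nlinarith [mul_le_mul_of_nonneg_left h1 (show (0:ℝ) ≤ p - q by linarith)]

/-- if `s₁ ∈ (0,1)`, `λ = ω_p(s₁)`, `s₂ ∈ (H_q(λ), 1)` and
`1 ≤ t ≤ λ`, then `F(τ(s₁,s₂,t)) < (p−q)·A(s₂)`. -/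
theorem stmt_18 (p q : ℝ) (hq : 1 < q) (hqp : q < p)
    (ωp ωq : ℝ → ℝ) (hωp : IsOmega p ωp) (hωq : IsOmega q ωq)
    (s₁ : ℝ) (hs₁ : s₁ ∈ Set.Ioo (0 : ℝ) 1)
    (s₂ : ℝ) (hs₂ : s₂ ∈ Set.Ioo (H q (ωp s₁)) 1)
    (t : ℝ) (ht1 : 1 ≤ t) (ht2 : t ≤ ωp s₁) :
    Ffun p q ωq (tau p q s₁ s₂ t) < (p - q) * Afun q ωq s₂ := by
  obtain ⟨hs10, hs11⟩ := hs₁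
  obtain ⟨hs2l, hs2u⟩ := hs₂
  have hq1 : (0:ℝ) < q - 1 := by linarith
  have hp0 : (0:ℝ) < p := by linarith
  have hpq : (0:ℝ) < p - q := by linarith
  obtain ⟨hlmem, hHl⟩ := hωp s₁ ⟨hs10, hs11.le⟩
  set L := ωp s₁ with hLdef
  -- L > 1
  have hL1 : 1 < L := by
    rcases eq_or_lt_of_le hlmem.1 with h | h
    · exfalso
      rw [← h] at hHl
      simp [H, Real.one_rpow] at hHl
      linarith
    · exact h
  have hL0 : (0:ℝ) < L := by linarith
  -- L < q/(q-1)
  have hLq : L < q / (q - 1) := by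
    have h1 : p / (p - 1) < q / (q - 1) := by
      rw [div_lt_div_iff₀ (by linarith) hq1]; nlinarith
    exact hlmem.2.trans h1
  -- 0 < H q L, so 0 < s₂
  have hHqL : 0 < H q L := by
    have h3 : (q - 1) * L < q := by rw [lt_div_iff₀ hq1] at hLq; linarith
    have e1 : L ^ q = L ^ (q - 1) * L := by
      rw [← Real.rpow_add_one (by positivity) (q - 1)]; ring_nf
    have hLp : (0:ℝ) < L ^ (q - 1) := Real.rpow_pos_of_pos hL0 _
    simp only [H]
    rw [e1]
    nlinarith
  have hs20 : (0:ℝ) < s₂ := hHqL.trans hs2l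
  -- ω_q(s₂)
  obtain ⟨h2mem, hH2⟩ := hωq s₂ ⟨hs20, hs2u.le⟩
  set w₂ := ωq s₂ with hw2def
  have hw21 : 1 < w₂ := by
    rcases eq_or_lt_of_le h2mem.1 with h | h
    · exfalso
      rw [← h] at hH2
      simp [H, Real.one_rpow] at hH2
      linarith
    · exact h
  -- g is antitone; its value at L is (s₂ - H q L)·L^(p-q) > 0
  have hganti := aux_g_anti p q s₁ s₂ hq hqp hs2u.le
  have hkey := hganti (mem_Ici.2 ht1) (mem_Ici.2 (ht1.trans ht2)) ht2
  dsimp only at hkey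
  have hs1e : s₁ = p * L ^ (p - 1) - (p - 1) * L ^ p := by rw [← hHl]; rfl
  have eL1 : L ^ (p - 1) = L ^ (q - 1) * L ^ (p - q) := by
    rw [← Real.rpow_add hL0]; ring_nf
  have eL2 : L ^ p = L ^ q * L ^ (p - q) := by
    rw [← Real.rpow_add hL0]; ring_nf
  have hgL : s₂ * L ^ (p - q) - s₁ - ((p - q) / p) * (L ^ p - s₁)
      = (s₂ - H q L) * L ^ (p - q) := by
    simp only [H]
    rw [hs1e, eL1, eL2]
    field_simp
    ring
  have hgLpos : 0 < s₂ * L ^ (p - q) - s₁ - ((p - q) / p) * (L ^ p - s₁) := by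
    rw [hgL]
    exact mul_pos (by linarith) (Real.rpow_pos_of_pos hL0 _)
  have hgtpos : 0 < s₂ * t ^ (p - q) - s₁ - ((p - q) / p) * (t ^ p - s₁) := by linarith
  -- facts about t
  have ht0 : (0:ℝ) < t := by linarith
  have htp : (1:ℝ) ≤ t ^ p := Real.one_le_rpow ht1 (by linarith)
  have htpq : (1:ℝ) ≤ t ^ (p - q) := Real.one_le_rpow ht1 (by linarith)
  have hnum : 0 < t ^ p - s₁ := by linarith
  have hD2 : 0 < s₂ * t ^ (p - q) - s₁ := by
    have := mul_pos (div_pos hpq hp0) hnum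
    linarith
  have hden : t ^ (p - q) - s₁ / s₂ = (s₂ * t ^ (p - q) - s₁) / s₂ := by
    field_simp
  have hdenpos : 0 < t ^ (p - q) - s₁ / s₂ := by
    rw [hden]; positivity
  -- τ ∈ (0, s₂)
  set τ := tau p q s₁ s₂ t with hτdef
  have hτpos : 0 < τ := by
    rw [hτdef]
    unfold tau
    positivity
  have hτlt : τ < s₂ := by
    rw [hτdef]
    unfold tau
    rw [show ((p - q) / p) * ((t ^ p - s₁) / (t ^ (p - q) - s₁ / s₂))
        = ((p - q) / p * (t ^ p - s₁)) / (t ^ (p - q) - s₁ / s₂) from by ring,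
      div_lt_iff₀ hdenpos]
    have he : s₂ * (t ^ (p - q) - s₁ / s₂) = s₂ * t ^ (p - q) - s₁ := by
      field_simp
    rw [he]
    linarith
  -- ω_q(τ)
  obtain ⟨hτmem, hHτ⟩ := hωq τ ⟨hτpos, by linarith⟩
  set w := ωq τ with hwdef
  have hw1 : 1 < w := by
    rcases eq_or_lt_of_le hτmem.1 with h | h
    · exfalso
      rw [← h] at hHτ
      simp [H, Real.one_rpow] at hHτ
      linarith
    · exact h
  -- w₂ < w
  have hw2w : w₂ < w := by
    by_contra h
    push_neg at h
    have := aux_H_anti q hq (mem_Ici.2 hτmem.1) (mem_Ici.2 h2mem.1) h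
    rw [hH2, hHτ] at this
    linarith
  -- rewrite F(τ)
  have ew : w ^ q = w ^ (q - 1) * w := by
    rw [← Real.rpow_add_one (by positivity) (q - 1)]; ring_nf
  have hτe : τ = q * w ^ (q - 1) - (q - 1) * w ^ q := by rw [← hHτ]; rfl
  have hwne : w - 1 ≠ 0 := by linarith
  have hwne' : 1 - w ≠ 0 := by linarith
  have hF : Ffun p q ωq τ = (p - q) * (w ^ q / ((q - 1) * (w - 1))) := by
    simp only [Ffun, ← hwdef]
    rw [hτe, ew]
    field_simp
    ring
  -- rewrite A(s₂)
  have ew2 : w₂ ^ q = w₂ ^ (q - 1) * w₂ := by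
    rw [← Real.rpow_add_one (by positivity) (q - 1)]; ring_nf
  have hs2e : s₂ = q * w₂ ^ (q - 1) - (q - 1) * w₂ ^ q := by rw [← hH2]; rfl
  have hw2ne : w₂ - 1 ≠ 0 := by linarith
  have hA : Afun q ωq s₂ = w₂ ^ q / ((q - 1) * (w₂ - 1)) := by
    simp only [Afun, ← hw2def]
    rw [mul_add, mul_div_cancel₀ _ (ne_of_gt hs20)]
    rw [hs2e, ew2]
    field_simp
    ring
  rw [hF, hA]
  exact mul_lt_mul_of_pos_left
    (aux_fdec q w₂ w hq hw21 hτmem.2 hw2w) hpq
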